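/- In K6 minus the edge {5,6}, each of the seven cuts δ(S) for S ∈ {{1,4},{2,4},{3,4},{1,4,6},{2,4,6},{3,4,6},{6}} has cardinality 4 or 8; hence any nonnegative integer combination of these cuts has total edge-weight divisible by 4. -/

import Mathlib

open scoped Classical

/-- `e` is an edge crossing the vertex set `S` (exactly one endpoint in `S`). -/
def InCut {V : Type*} (S : Set V) (e : Sym2 V) : Prop :=
  ∃ i j, e = s(i, j) ∧ i ∈ S ∧ j ∉ S

/-- The cut of `G` generated by a vertex set `S`, as a set of edges. -/
def cutSet {V : Type*} (G : SimpleGraph V) (S : Set V) : Set (Sym2 V) :=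
  {e | e ∈ G.edgeSet ∧ InCut S e}

/-- The integer cut vector `δ(S)` of a graph `G`. -/
noncomputable def cutVecZ {V : Type*} (G : SimpleGraph V) (S : Set V) : Sym2 V → ℤ :=
  fun e => if e ∈ G.edgeSet ∧ InCut S e then 1 else 0

/-- `K₆ − e`: the complete graph on `Fin 6` (vertices `0,…,5` standing for `1,…,6`)
with the edge `{4,5}` (i.e. `{5,6}` in 1-indexed notation) removed. -/
noncomputable def K6e : SimpleGraph (Fin 6) :=
  (⊤ : SimpleGraph (Fin 6)).deleteEdges {s((4 : Fin 6), (5 : Fin 6))}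

/-- The seven vertex sets `{1,4},{2,4},{3,4},{1,4,6},{2,4,6},{3,4,6},{6}` (1-indexed),
written 0-indexed. -/
noncomputable def sevenSets : Fin 7 → Set (Fin 6) :=
  ![{0, 3}, {1, 3}, {2, 3}, {0, 3, 5}, {1, 3, 5}, {2, 3, 5}, {5}]


lemma inCut_iff {V : Type*} (S : Set V) (a b : V) :
    InCut S s(a, b) ↔ (a ∈ S ∧ b ∉ S) ∨ (b ∈ S ∧ a ∉ S) := by
  constructor
  · rintro ⟨i, j, he, hi, hj⟩
    rw [Sym2.eq_iff] at he
    rcases he with ⟨rfl, rfl⟩ | ⟨rfl, rfl⟩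
    · exact Or.inl ⟨hi, hj⟩
    · exact Or.inr ⟨hi, hj⟩
  · rintro (⟨h1, h2⟩ | ⟨h1, h2⟩)
    · exact ⟨a, b, rfl, h1, h2⟩
    · exact ⟨b, a, Sym2.eq_swap.symm, h1, h2⟩

lemma mem_K6e_iff (e : Sym2 (Fin 6)) :
    e ∈ K6e.edgeSet ↔ ¬ e.IsDiag ∧ e ≠ s((4 : Fin 6), (5 : Fin 6)) := by
  simp [K6e, SimpleGraph.edgeSet_deleteEdges, Set.mem_diff]

instance instDecInCut (S : Set (Fin 6)) [DecidablePred (· ∈ S)] (e : Sym2 (Fin 6)) :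
    Decidable (InCut S e) :=
  e.recOnSubsingleton fun a b => decidable_of_iff _ (inCut_iff S a b).symm

instance instDecK6e (e : Sym2 (Fin 6)) : Decidable (e ∈ K6e.edgeSet) :=
  decidable_of_iff _ (mem_K6e_iff e).symm

lemma ncard_cut (S : Set (Fin 6)) [DecidablePred (· ∈ S)] :
    (cutSet K6e S).ncard =
      (Finset.univ.filter fun e : Sym2 (Fin 6) => e ∈ K6e.edgeSet ∧ InCut S e).card := by
  rw [show cutSet K6e S =
      ↑(Finset.univ.filter fun e : Sym2 (Fin 6) => e ∈ K6e.edgeSet ∧ InCut S e) by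
    ext e; simp [cutSet]]
  exact Set.ncard_coe_finset _

instance dA : DecidablePred (· ∈ ({0, 3} : Set (Fin 6))) := fun a =>
  decidable_of_iff (a = 0 ∨ a = 3) (by simp)
instance dB : DecidablePred (· ∈ ({1, 3} : Set (Fin 6))) := fun a =>
  decidable_of_iff (a = 1 ∨ a = 3) (by simp)
instance dC : DecidablePred (· ∈ ({2, 3} : Set (Fin 6))) := fun a =>
  decidable_of_iff (a = 2 ∨ a = 3) (by simp)
instance dD : DecidablePred (· ∈ ({0, 3, 5} : Set (Fin 6))) := fun a =>
  decidable_of_iff (a = 0 ∨ a = 3 ∨ a = 5) (by simp)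
instance dE : DecidablePred (· ∈ ({1, 3, 5} : Set (Fin 6))) := fun a =>
  decidable_of_iff (a = 1 ∨ a = 3 ∨ a = 5) (by simp)
instance dF : DecidablePred (· ∈ ({2, 3, 5} : Set (Fin 6))) := fun a =>
  decidable_of_iff (a = 2 ∨ a = 3 ∨ a = 5) (by simp)
instance dG : DecidablePred (· ∈ ({5} : Set (Fin 6))) := fun a =>
  decidable_of_iff (a = 5) (by simp)

lemma sum_cutVec (S : Set (Fin 6)) :
    ∑ e : Sym2 (Fin 6), cutVecZ K6e S e = ((cutSet K6e S).ncard : ℤ) := by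
  classical
  have h : ∀ e : Sym2 (Fin 6), cutVecZ K6e S e
      = if e ∈ K6e.edgeSet ∧ InCut S e then (1 : ℤ) else 0 := by
    intro e
    by_cases hp : e ∈ K6e.edgeSet ∧ InCut S e <;> simp [cutVecZ, hp]
  rw [ncard_cut]
  simp_rw [h]
  rw [← Finset.sum_filter]
  simp

/-- In `K₆ − e`, each of the seven cuts `δ(S)` has cardinality 4 or 8;
hence any nonnegative integer combination of these seven cuts has total edge-weight
divisible by 4. -/
theorem sevenCuts_card_and_divisibility :
    (∀ i : Fin 7, (cutSet K6e (sevenSets i)).ncard = 4 ∨ (cutSet K6e (sevenSets i)).ncard = 8)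
      ∧ ∀ c : Fin 7 → ℕ,
        (4 : ℤ) ∣ ∑ e : Sym2 (Fin 6), ∑ i : Fin 7, (c i : ℤ) * cutVecZ K6e (sevenSets i) e := by
  have hcard : ∀ i : Fin 7, (cutSet K6e (sevenSets i)).ncard = 4 ∨
      (cutSet K6e (sevenSets i)).ncard = 8 := by
    intro i
    fin_cases i
    · right; show (cutSet K6e ({0, 3} : Set (Fin 6))).ncard = _; rw [ncard_cut]; decide
    · right; show (cutSet K6e ({1, 3} : Set (Fin 6))).ncard = _; rw [ncard_cut]; decide
    · right; show (cutSet K6e ({2, 3} : Set (Fin 6))).ncard = _; rw [ncard_cut]; decide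
    · right; show (cutSet K6e ({0, 3, 5} : Set (Fin 6))).ncard = _; rw [ncard_cut]; decide
    · right; show (cutSet K6e ({1, 3, 5} : Set (Fin 6))).ncard = _; rw [ncard_cut]; decide
    · right; show (cutSet K6e ({2, 3, 5} : Set (Fin 6))).ncard = _; rw [ncard_cut]; decide
    · left; show (cutSet K6e ({5} : Set (Fin 6))).ncard = _; rw [ncard_cut]; decide
  refine ⟨hcard, ?_⟩
  intro c
  rw [Finset.sum_comm]
  refine Finset.dvd_sum fun i _ => ?_
  rw [← Finset.mul_sum, sum_cutVec]
  rcases hcard i with h | h <;> rw [h]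
  · exact ⟨c i, by ring⟩
  · exact ⟨c i * 2, by push_cast; ring⟩
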